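/- Let S be a finite set, let σ : S → S be a bijection, let m ≥ 1, let c ∈ ℕ, and let T_1, …, T_m be subsets of S. Call an index i ∈ {2,…,m} unfoldable if T_i is not a subset of σ(T_{i−1}) (where σ(T) denotes the image of T under σ), and call i critical if T_i ≠ σ(T_{i−1}). If at most c indices in {2,…,m} are unfoldable, then at most c + |S|·(c+1) indices in {2,…,m} are critical. -/

import Mathlib

/-- Cardinality chain lemma: if each step from `i` to `j` is non-increasing
(`T k ⊆ σ '' T (k-1)`), then `(T j).ncard ≤ (T i).ncard`. -/
lemma stmt8_chain {S : Type*} [Fintype S] (σ : S → S) (hσ : Function.Injective σ)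
    (T : ℕ → Set S) (i j : ℕ) (hij : i ≤ j)
    (h : ∀ k, i < k → k ≤ j → T k ⊆ σ '' T (k - 1)) :
    (T j).ncard ≤ (T i).ncard := by
  induction j, hij using Nat.le_induction with
  | base => exact le_rfl
  | succ j hij ih =>
    have h1 : T (j + 1) ⊆ σ '' T j := by
      have := h (j + 1) (by omega) le_rfl
      simpa using this
    have h2 : (T (j + 1)).ncard ≤ (σ '' T j).ncard :=
      Set.ncard_le_ncard h1 (Set.toFinite _)
    have h3 : (σ '' T j).ncard = (T j).ncard := Set.ncard_image_of_injective _ hσ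
    have h4 := ih (fun k hk hk' => h k hk (by omega))
    omega

/-- Claim 5 in the proof of Lemma 4.2, in abstract form: let `σ : S → S` be a
bijection of a finite set and `T_1,…,T_m ⊆ S`. If at most `c` indices
`i ∈ {2,…,m}` are unfoldable (`T_i ⊄ σ(T_{i−1})`), then at most
`c + |S|·(c+1)` indices in `{2,…,m}` are critical (`T_i ≠ σ(T_{i−1})`). -/
theorem stmt8 {S : Type*} [Fintype S] (σ : S → S) (hσ : Function.Bijective σ)
    (m : ℕ) (hm : 1 ≤ m) (c : ℕ) (T : ℕ → Set S)
    (hunf : {i | i ∈ Set.Icc 2 m ∧ ¬ T i ⊆ σ '' T (i - 1)}.ncard ≤ c) :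
    {i | i ∈ Set.Icc 2 m ∧ T i ≠ σ '' T (i - 1)}.ncard ≤
      c + Fintype.card S * (c + 1) := by
  classical
  obtain ⟨hinj, -⟩ := hσ
  set n := Fintype.card S with hn
  set I : Finset ℕ := Finset.Icc 2 m with hI
  set U : Finset ℕ := I.filter (fun i => ¬ T i ⊆ σ '' T (i - 1)) with hU
  set C : Finset ℕ := I.filter (fun i => T i ≠ σ '' T (i - 1)) with hC
  have hsetU : {i | i ∈ Set.Icc 2 m ∧ ¬ T i ⊆ σ '' T (i - 1)} = ↑U := by
    ext i; simp [hU, hI, Set.mem_Icc]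
  have hsetC : {i | i ∈ Set.Icc 2 m ∧ T i ≠ σ '' T (i - 1)} = ↑C := by
    ext i; simp [hC, hI, Set.mem_Icc]
  rw [hsetC, Set.ncard_coe_finset]
  rw [hsetU, Set.ncard_coe_finset] at hunf
  -- (T i).ncard = cardinality of T i
  -- non-unfoldable indices in range satisfy the subset relation
  have hsub : ∀ k ∈ I, k ∉ U → T k ⊆ σ '' T (k - 1) := by
    intro k hkI hkU
    by_contra h
    exact hkU (Finset.mem_filter.mpr ⟨hkI, h⟩)
  -- block identifier
  set b : ℕ → ℕ := fun i =>
    if h : (U.filter (fun k => k ≤ i)).Nonempty then (U.filter (fun k => k ≤ i)).max' h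
    else 0 with hb
  have hbmem : ∀ i, b i ∈ insert 0 U := by
    intro i
    by_cases h : (U.filter (fun k => k ≤ i)).Nonempty
    · have hm' := Finset.max'_mem _ h
      rw [Finset.mem_filter] at hm'
      simp only [hb, dif_pos h]
      exact Finset.mem_insert_of_mem hm'.1
    · simp [hb, dif_neg h]
  have hble : ∀ i, b i ≤ i := by
    intro i
    by_cases h : (U.filter (fun k => k ≤ i)).Nonempty
    · simp only [hb, dif_pos h]
      apply Finset.max'_le
      intro y hy
      exact (Finset.mem_filter.mp hy).2
    · simp [hb, dif_neg h]
  have hbge : ∀ i k, k ∈ U → k ≤ i → k ≤ b i := by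
    intro i k hkU hki
    have hk : k ∈ U.filter (fun k => k ≤ i) := Finset.mem_filter.mpr ⟨hkU, hki⟩
    have h : (U.filter (fun k => k ≤ i)).Nonempty := ⟨k, hk⟩
    simp only [hb, dif_pos h]
    exact Finset.le_max' _ k hk
  -- critical non-unfoldable indices give strict cardinality drop
  have hDlt : ∀ i ∈ C \ U, (T i).ncard < (T (i - 1)).ncard := by
    intro i hi
    rw [Finset.mem_sdiff] at hi
    obtain ⟨hiC, hiU⟩ := hi
    rw [Finset.mem_filter] at hiC
    have hss : T i ⊂ σ '' T (i - 1) :=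
      (hsub i hiC.1 hiU).ssubset_of_ne hiC.2
    have := Set.ncard_lt_ncard hss (Set.toFinite _)
    have himg : (σ '' T (i - 1)).ncard = (T (i - 1)).ncard := Set.ncard_image_of_injective _ hinj
    omega
  have hDn : ∀ i ∈ C \ U, (T i).ncard < n := by
    intro i hi
    have h1 := hDlt i hi
    have h2 : (T (i - 1)).ncard ≤ n := by
      have := Set.ncard_le_ncard (Set.subset_univ (T (i - 1))) (Set.toFinite _)
      rwa [Set.ncard_univ, Nat.card_eq_fintype_card] at this
    omega
  -- key: within a block, f strictly decreases along critical indices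
  have hkey : ∀ i ∈ C \ U, ∀ j ∈ C \ U, i < j → b i = b j → (T j).ncard < (T i).ncard := by
    intro i hi j hj hij hbij
    have hiI : i ∈ I := (Finset.mem_filter.mp (Finset.mem_sdiff.mp hi).1).1
    have hjI : j ∈ I := (Finset.mem_filter.mp (Finset.mem_sdiff.mp hj).1).1
    rw [hI, Finset.mem_Icc] at hiI hjI
    -- no unfoldable index k with i < k ≤ j
    have hnoU : ∀ k, i < k → k ≤ j → k ∉ U := by
      intro k hk1 hk2 hkU
      have := hbge j k hkU hk2
      have := hble i
      omega
    have hchain : (T (j - 1)).ncard ≤ (T i).ncard := by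
      apply stmt8_chain σ hinj T i (j - 1) (by omega)
      intro k hk1 hk2
      apply hsub k
      · rw [hI, Finset.mem_Icc]; omega
      · exact hnoU k hk1 (by omega)
    have := hDlt j hj
    omega
  -- injection into (insert 0 U) ×ˢ range n
  have hinjcard : (C \ U).card ≤ ((insert 0 U) ×ˢ Finset.range n).card := by
    apply Finset.card_le_card_of_injOn (fun i => (b i, (T i).ncard))
    · intro i hi
      rw [Finset.mem_coe, Finset.mem_product]
      exact ⟨hbmem i, Finset.mem_range.mpr (hDn i (Finset.mem_coe.mp hi))⟩
    · intro i hi j hj hgij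
      simp only [Prod.mk.injEq] at hgij
      rcases lt_trichotomy i j with h | h | h
      · exact absurd hgij.2 (Nat.ne_of_gt (hkey i hi j hj h hgij.1))
      · exact h
      · exact absurd hgij.2.symm (Nat.ne_of_gt (hkey j hj i hi h hgij.1.symm))
  have hprod : ((insert 0 U) ×ˢ Finset.range n).card ≤ (c + 1) * n := by
    rw [Finset.card_product, Finset.card_range]
    have h1 : (insert 0 U).card ≤ U.card + 1 := Finset.card_insert_le _ _
    exact Nat.mul_le_mul_right n (by omega)
  have hfinal : C.card ≤ (C \ U).card + U.card := Finset.card_le_card_sdiff_add_card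
  have := Nat.mul_comm (c + 1) n
  omega
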